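/- Let G be a graph of maximum degree d ≥ 2 and let δ > 0. Suppose some vertex v_0 of G lies on at least δ·d^{k-1} cycles of length k (k ≥ 4 fixed). Then there exist vertex sets X, Y ⊆ V(G) with e(X,Y) ≥ (δ/(2 log₂ d)^k)·|X||Y| and min(|X|,|Y|) ≥ δ·d/(log₂ d)^{k-3}. -/

import Mathlib

open Finset

set_option linter.unusedSectionVars false

section AuxCycleLemma

variable {V : Type} [Fintype V] [DecidableEq V] {G : SimpleGraph V} [DecidableRel G.Adj]

private lemma aux_cons2_inj {u v a a' b b' : V} (h1 : G.Adj u a) (h2 : G.Adj a b)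
    (h1' : G.Adj u a') (h2' : G.Adj a' b') (q : G.Walk b v) (q' : G.Walk b' v)
    (ha : a = a') (hb : b = b') (hq : HEq q q') :
    SimpleGraph.Walk.cons h1 (SimpleGraph.Walk.cons h2 q)
      = SimpleGraph.Walk.cons h1' (SimpleGraph.Walk.cons h2' q') := by
  subst ha; subst hb; cases hq; rfl

private lemma aux_recon {u v : V} (p : G.Walk u v) (hp : ¬ p.Nil) (hp' : ¬ p.tail.Nil) :
    p = SimpleGraph.Walk.cons (p.adj_snd hp)
      (SimpleGraph.Walk.cons (p.tail.adj_snd hp') p.tail.tail) := by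
  conv_lhs => rw [← SimpleGraph.Walk.cons_tail_eq p hp]
  rw [SimpleGraph.Walk.cons_tail_eq p.tail hp']

private lemma aux_walkcount (d : ℕ) (hdeg : ∀ v, G.degree v ≤ d) :
    ∀ (n : ℕ) (u v : V), ((G.finsetWalkLength (n+1) u v).card ≤ d^n) := by
  intro n
  induction n with
  | zero =>
    intro u v
    simp only [pow_zero]
    rw [show (0+1) = 1 from rfl, SimpleGraph.finsetWalkLength]
    refine le_trans (Finset.card_biUnion_le) ?_
    have h : ∀ w : ↥(G.neighborSet u),
        (G.finsetWalkLength 0 (w:V) v).card ≤ if (w:V) = v then 1 else 0 := by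
      intro w
      split
      · refine Finset.card_le_one.2 fun a ha b hb => ?_
        have ha' := SimpleGraph.mem_finsetWalkLength_iff.1 ha
        have hb' := SimpleGraph.mem_finsetWalkLength_iff.1 hb
        cases a with
        | nil => cases b with
          | nil => rfl
          | cons h q => simp at hb'
        | cons h q => simp at ha'
      · simp only [Nat.le_zero, Finset.card_eq_zero, Finset.eq_empty_iff_forall_notMem]
        intro p hp
        have hp' := SimpleGraph.mem_finsetWalkLength_iff.1 hp
        cases p with
        | nil => simp_all
        | cons h q => simp at hp'
    calc ∑ w : ↥(G.neighborSet u), ((G.finsetWalkLength 0 (w:V) v).map _).card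
        = ∑ w : ↥(G.neighborSet u), (G.finsetWalkLength 0 (w:V) v).card := by
          simp [Finset.card_map]
      _ ≤ ∑ w : ↥(G.neighborSet u), if (w:V) = v then 1 else 0 :=
          Finset.sum_le_sum fun w _ => h w
      _ = (Finset.univ.filter fun w : ↥(G.neighborSet u) => (w:V) = v).card := by
          rw [Finset.card_filter]
      _ ≤ 1 := Finset.card_le_one.2 (by
          intro a ha b hb
          simp only [Finset.mem_filter] at ha hb
          exact Subtype.ext (ha.2.trans hb.2.symm))
  | succ n ih =>
    intro u v
    rw [SimpleGraph.finsetWalkLength]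
    refine le_trans (Finset.card_biUnion_le) ?_
    calc ∑ w : ↥(G.neighborSet u), ((G.finsetWalkLength (n+1) (w:V) v).map _).card
        ≤ ∑ _w : ↥(G.neighborSet u), d^n := by
          refine Finset.sum_le_sum fun w _ => ?_
          rw [Finset.card_map]; exact ih _ _
      _ = Fintype.card ↥(G.neighborSet u) * d^n := by
          rw [Finset.sum_const, smul_eq_mul, Finset.card_univ]
      _ ≤ d * d^n := by
          gcongr
          rw [SimpleGraph.card_neighborSet_eq_degree]; exact hdeg u
      _ = d^(n+1) := by ring

private lemma aux_firststep (d : ℕ) (hdeg : ∀ v, G.degree v ≤ d) (n : ℕ) (u v : V) :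
    (G.finsetWalkLength (n+2) u v).card ≤ G.degree u * d^n := by
  rw [show n+2 = (n+1)+1 from rfl, SimpleGraph.finsetWalkLength]
  refine le_trans (Finset.card_biUnion_le) ?_
  calc ∑ w : ↥(G.neighborSet u), ((G.finsetWalkLength (n+1) (w:V) v).map _).card
      ≤ ∑ _w : ↥(G.neighborSet u), d^n := by
        refine Finset.sum_le_sum fun w _ => ?_
        rw [Finset.card_map]; exact aux_walkcount d hdeg _ _ _
    _ = Fintype.card ↥(G.neighborSet u) * d^n := by
        rw [Finset.sum_const, smul_eq_mul, Finset.card_univ]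
    _ = G.degree u * d^n := by rw [SimpleGraph.card_neighborSet_eq_degree]

private lemma aux_fiber_bound (v₀ : V) (m : ℕ) (W : Finset (G.Walk v₀ v₀))
    (hW : ∀ p ∈ W, p.length = m + 4) (y : V)
    [DecidablePred (fun p : G.Walk v₀ v₀ => p.tail.getVert 1 = y)] :
    (W.filter (fun p => p.tail.getVert 1 = y)).card ≤
      ((G.neighborFinset v₀).filter (fun x => G.Adj x y)).card
        * (G.finsetWalkLength (m+2) y v₀).card := by
  classical
  have hcard : (((G.neighborFinset v₀).filter (fun x => G.Adj x y)) ×ˢ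
      ((G.finsetWalkLength (m+2) y v₀).map
        ⟨Sigma.mk y, sigma_mk_injective⟩ : Finset (Σ z : V, G.Walk z v₀))).card
      = ((G.neighborFinset v₀).filter (fun x => G.Adj x y)).card
        * (G.finsetWalkLength (m+2) y v₀).card := by
    rw [Finset.card_product, Finset.card_map]
  rw [← hcard]
  have nil1 : ∀ p ∈ W, ¬ p.Nil := by
    intro p hp
    rw [SimpleGraph.Walk.nil_iff_length_eq]
    have := hW p hp; omega
  have nil2 : ∀ p ∈ W, ¬ p.tail.Nil := by
    intro p hp
    rw [SimpleGraph.Walk.nil_iff_length_eq]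
    have h1 := hW p hp
    have := SimpleGraph.Walk.length_tail_add_one (nil1 p hp)
    omega
  refine Finset.card_le_card_of_injOn
    (fun p => (p.getVert 1, (⟨p.tail.getVert 1, p.tail.tail⟩ : Σ z : V, G.Walk z v₀))) ?_ ?_
  · intro p hp
    rw [Finset.mem_coe, Finset.mem_filter] at hp
    obtain ⟨hpW, hpy⟩ := hp
    have hlen := hW p hpW
    have hnil := nil1 p hpW
    have hnil' := nil2 p hpW
    have hlen' : p.tail.length = m + 3 := by
      have := SimpleGraph.Walk.length_tail_add_one hnil; omega
    have hlen'' : p.tail.tail.length = m + 2 := by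
      have := SimpleGraph.Walk.length_tail_add_one hnil'; omega
    rw [Finset.mem_coe, Finset.mem_product]
    constructor
    · rw [Finset.mem_filter, SimpleGraph.mem_neighborFinset]
      refine ⟨p.adj_snd hnil, ?_⟩
      have : G.Adj (p.getVert 1) (p.tail.getVert 1) := p.tail.adj_snd hnil'
      rwa [hpy] at this
    · subst hpy
      simp only [Finset.mem_map, Function.Embedding.coeFn_mk]
      exact ⟨p.tail.tail, SimpleGraph.mem_finsetWalkLength_iff.2 hlen'', rfl⟩
  · intro p₁ hp₁ p₂ hp₂ hf
    rw [Finset.coe_filter, Set.mem_setOf_eq] at hp₁ hp₂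
    obtain ⟨h1W, h1y⟩ := hp₁
    obtain ⟨h2W, h2y⟩ := hp₂
    have e1 : p₁.getVert 1 = p₂.getVert 1 := congrArg Prod.fst hf
    have es := congrArg Prod.snd hf
    simp only at es
    have e2 : p₁.tail.getVert 1 = p₂.tail.getVert 1 := congrArg Sigma.fst es
    have e3 : HEq p₁.tail.tail p₂.tail.tail := by
      rw [Sigma.ext_iff] at es; exact es.2
    rw [aux_recon p₁ (nil1 p₁ h1W) (nil2 p₁ h1W), aux_recon p₂ (nil1 p₂ h2W) (nil2 p₂ h2W)]
    exact aux_cons2_inj _ _ _ _ _ _ e1 e2 e3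

private lemma aux_len1 (u v : V) : (G.finsetWalkLength 1 u v).card ≤ if G.Adj u v then 1 else 0 := by
  split
  · refine Finset.card_le_one.2 fun a ha b hb => ?_
    have ha' := SimpleGraph.mem_finsetWalkLength_iff.1 ha
    have hb' := SimpleGraph.mem_finsetWalkLength_iff.1 hb
    cases a with
    | nil => simp at ha'
    | cons h q =>
      cases q with
      | nil => cases b with
        | nil => simp at hb'
        | cons h' q' =>
          cases q' with
          | nil => rfl
          | cons h'' q'' => simp at hb'
      | cons h2 q2 => simp at ha'
  · simp only [Nat.le_zero, Finset.card_eq_zero, Finset.eq_empty_iff_forall_notMem]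
    intro p hp
    have hp' := SimpleGraph.mem_finsetWalkLength_iff.1 hp
    cases p with
    | nil => simp at hp'
    | cons h q =>
      cases q with
      | nil => simp_all
      | cons h2 q2 => simp at hp'

private lemma aux_sumwalkcount (d : ℕ) (hdeg : ∀ v, G.degree v ≤ d) :
    ∀ (n : ℕ) (u : V), ∑ v ∈ Finset.univ, (G.finsetWalkLength (n+1) u v).card
      ≤ G.degree u * d^n := by
  intro n
  induction n with
  | zero =>
    intro u
    calc ∑ v ∈ Finset.univ, (G.finsetWalkLength 1 u v).card
        ≤ ∑ v ∈ Finset.univ, if G.Adj u v then 1 else 0 :=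
          Finset.sum_le_sum fun v _ => aux_len1 u v
      _ = (Finset.univ.filter (fun v => G.Adj u v)).card := by rw [Finset.card_filter]
      _ = G.degree u * d^0 := by
          rw [← SimpleGraph.neighborFinset_eq_filter, pow_zero, mul_one]; rfl
  | succ n ih =>
    intro u
    have hstep : ∀ v : V, (G.finsetWalkLength (n+2) u v).card ≤
        ∑ w : ↥(G.neighborSet u), (G.finsetWalkLength (n+1) (w:V) v).card := by
      intro v
      rw [show n+2 = (n+1)+1 from rfl, SimpleGraph.finsetWalkLength]
      refine le_trans (Finset.card_biUnion_le) (le_of_eq ?_)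
      exact Finset.sum_congr rfl fun w _ => Finset.card_map _
    calc ∑ v ∈ Finset.univ, (G.finsetWalkLength (n+2) u v).card
        ≤ ∑ v ∈ Finset.univ, ∑ w : ↥(G.neighborSet u),
            (G.finsetWalkLength (n+1) (w:V) v).card :=
          Finset.sum_le_sum fun v _ => hstep v
      _ = ∑ w : ↥(G.neighborSet u), ∑ v ∈ Finset.univ,
            (G.finsetWalkLength (n+1) (w:V) v).card := Finset.sum_comm
      _ ≤ ∑ w : ↥(G.neighborSet u), G.degree (w:V) * d^n :=
          Finset.sum_le_sum fun w _ => ih (w:V)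
      _ ≤ ∑ _w : ↥(G.neighborSet u), d * d^n :=
          Finset.sum_le_sum fun w _ => Nat.mul_le_mul_right _ (hdeg _)
      _ = Fintype.card ↥(G.neighborSet u) * (d * d^n) := by
          rw [Finset.sum_const, smul_eq_mul, Finset.card_univ]
      _ = G.degree u * d^(n+1) := by
          rw [SimpleGraph.card_neighborSet_eq_degree]; ring

end AuxCycleLemma

/-- If `G` has maximum degree at most `d ≥ 2` and a vertex `v₀` lies on at least
`δ·d^{k-1}` cycles of length `k` (each cycle of length `k` through `v₀` corresponds to
exactly two closed walks at `v₀` that are cycles of length `k`), then there are sets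
`X, Y` with `e(X,Y) ≥ (δ/(2 log₂ d)^k)·|X||Y|` and `min(|X|,|Y|) ≥ δ·d/(log₂ d)^{k-3}`. -/
theorem stmt11 {V : Type} [Fintype V] [DecidableEq V] (G : SimpleGraph V)
    [DecidableRel G.Adj] (d k : ℕ) (δ : ℝ) (hd : 2 ≤ d) (hk : 4 ≤ k) (hδ : 0 < δ)
    (hdeg : ∀ v, G.degree v ≤ d) (v₀ : V)
    (hcyc : δ * (d : ℝ) ^ (k - 1) ≤
      ({p : G.Walk v₀ v₀ | p.IsCycle ∧ p.length = k}.ncard : ℝ) / 2) :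
    ∃ X Y : Finset V,
      δ / (2 * Real.logb 2 d) ^ k * X.card * Y.card ≤
        (((X ×ˢ Y).filter fun p => G.Adj p.1 p.2).card : ℝ) ∧
      δ * d / (Real.logb 2 d) ^ (k - 3) ≤ min (X.card : ℝ) (Y.card : ℝ) := by
  classical
  obtain ⟨j, rfl⟩ : ∃ j, k = j + 4 := ⟨k - 4, by omega⟩
  have hd0 : (0:ℝ) < (d:ℝ) := by
    have : (2:ℝ) ≤ (d:ℝ) := by exact_mod_cast hd
    linarith
  set L := Real.logb 2 (d:ℝ) with hLdef
  have hL : 1 ≤ L := by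
    rw [hLdef, show (1:ℝ) = Real.logb 2 2 from (Real.logb_self_eq_one (by norm_num)).symm]
    exact Real.logb_le_logb_of_le (by norm_num) (by norm_num) (by exact_mod_cast hd)
  have h2L : (1:ℝ) ≤ 2 * L := by linarith
  have hLpow : (1:ℝ) ≤ (2*L)^(j+4) := one_le_pow₀ h2L
  have hLpos : (0:ℝ) < (2*L)^(j+4) := by linarith
  set X := G.neighborFinset v₀ with hXdef
  set W := (G.finsetWalkLength (j+4) v₀ v₀).filter (fun p => p.IsCycle) with hWdef
  have hWlen : ∀ p ∈ W, p.length = j + 4 := fun p hp =>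
    SimpleGraph.mem_finsetWalkLength_iff.1 (Finset.mem_filter.1 hp).1
  have hset : {p : G.Walk v₀ v₀ | p.IsCycle ∧ p.length = j+4} = ↑W := by
    ext p
    simp [hWdef, SimpleGraph.mem_finsetWalkLength_iff, and_comm]
  rw [show j+4-1 = j+3 from rfl, hset, Set.ncard_coe_finset] at hcyc
  have hN : 2 * (δ * (d:ℝ)^(j+3)) ≤ (W.card : ℝ) := by linarith
  -- degree lower bound
  have hA : W.card ≤ X.card * d^(j+2) := by
    calc W.card ≤ (G.finsetWalkLength (j+4) v₀ v₀).card :=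
          Finset.card_le_card (Finset.filter_subset _ _)
      _ ≤ G.degree v₀ * d^(j+2) := aux_firststep d hdeg (j+2) v₀ v₀
      _ = X.card * d^(j+2) := rfl
  have hXd : X.card ≤ d := hdeg v₀
  have hXdr : (X.card:ℝ) ≤ (d:ℝ) := by exact_mod_cast hXd
  have hD2 : 2*(δ*(d:ℝ)) ≤ (X.card:ℝ) := by
    have h1 : (W.card:ℝ) ≤ (X.card:ℝ) * (d:ℝ)^(j+2) := by exact_mod_cast hA
    have h2 : (2*(δ*(d:ℝ))) * (d:ℝ)^(j+2) ≤ (X.card:ℝ) * (d:ℝ)^(j+2) := by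
      calc (2*(δ*(d:ℝ))) * (d:ℝ)^(j+2) = 2*(δ*(d:ℝ)^(j+3)) := by ring
        _ ≤ (W.card:ℝ) := hN
        _ ≤ _ := h1
    exact le_of_mul_le_mul_right h2 (by positivity)
  have ha0 : (0:ℝ) ≤ δ / (2*L)^(j+4) := div_nonneg hδ.le hLpos.le
  set degX : V → ℕ := fun y => (X.filter (fun x => G.Adj x y)).card with hdegXdef
  set Pq : V → Prop := fun y => δ / (2*L)^(j+4) * (X.card:ℝ) ≤ (degX y : ℝ) with hPqdef
  set Y := Finset.univ.filter (fun y => Pq y) with hYdef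
  set Ny : V → ℕ := fun y => (W.filter (fun p => p.tail.getVert 1 = y)).card with hNydef
  have hfib : W.card = ∑ y ∈ Finset.univ, Ny y :=
    Finset.card_eq_sum_card_fiberwise (fun p _ => Finset.mem_univ _)
  have hNyb : ∀ y, Ny y ≤ degX y * d^(j+1) := by
    intro y
    refine le_trans (aux_fiber_bound v₀ j W hWlen y) ?_
    exact Nat.mul_le_mul_left _ (aux_walkcount d hdeg (j+1) y v₀)
  have hsplit : ∑ y ∈ Y, Ny y + ∑ y ∈ Finset.univ.filter (fun y => ¬ Pq y), Ny y = W.card := by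
    rw [hfib, hYdef]
    exact Finset.sum_filter_add_sum_filter_not _ _ _
  have hrev : ∀ y : V, (G.finsetWalkLength (j+2) y v₀).card
      = (G.finsetWalkLength (j+2) v₀ y).card := by
    intro y
    refine Finset.card_bij' (fun p _ => p.reverse) (fun p _ => p.reverse) ?_ ?_ ?_ ?_
    · intro p hp
      rw [SimpleGraph.mem_finsetWalkLength_iff] at hp ⊢
      simpa using hp
    · intro p hp
      rw [SimpleGraph.mem_finsetWalkLength_iff] at hp ⊢
      simpa using hp
    · intro p _; simp
    · intro p _; simp
  have hsumR : ∑ y ∈ Finset.univ, (G.finsetWalkLength (j+2) y v₀).card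
      ≤ X.card * d^(j+1) := by
    calc ∑ y ∈ Finset.univ, (G.finsetWalkLength (j+2) y v₀).card
        = ∑ y ∈ Finset.univ, (G.finsetWalkLength (j+2) v₀ y).card :=
          Finset.sum_congr rfl fun y _ => hrev y
      _ ≤ G.degree v₀ * d^(j+1) := aux_sumwalkcount d hdeg (j+1) v₀
      _ = X.card * d^(j+1) := rfl
  have hbadsum : (∑ y ∈ Finset.univ.filter (fun y => ¬ Pq y), (Ny y:ℝ)) ≤ δ * (d:ℝ)^(j+3) := by
    have hterm : ∀ y ∈ Finset.univ.filter (fun y => ¬ Pq y),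
        (Ny y : ℝ) ≤ δ / (2*L)^(j+4) * (X.card:ℝ)
          * ((G.finsetWalkLength (j+2) y v₀).card : ℝ) := by
      intro y hy
      simp only [Finset.mem_filter, Finset.mem_univ, true_and] at hy
      have h1 : (Ny y : ℝ) ≤ (degX y : ℝ) * ((G.finsetWalkLength (j+2) y v₀).card : ℝ) := by
        exact_mod_cast aux_fiber_bound v₀ j W hWlen y
      have h2 : (degX y : ℝ) ≤ δ / (2*L)^(j+4) * (X.card:ℝ) := le_of_not_ge hy
      exact le_trans h1 (mul_le_mul_of_nonneg_right h2 (Nat.cast_nonneg _))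
    calc ∑ y ∈ Finset.univ.filter (fun y => ¬ Pq y), (Ny y:ℝ)
        ≤ ∑ y ∈ Finset.univ.filter (fun y => ¬ Pq y),
            δ / (2*L)^(j+4) * (X.card:ℝ) * ((G.finsetWalkLength (j+2) y v₀).card : ℝ) :=
          Finset.sum_le_sum hterm
      _ ≤ ∑ y ∈ Finset.univ,
            δ / (2*L)^(j+4) * (X.card:ℝ) * ((G.finsetWalkLength (j+2) y v₀).card : ℝ) :=
          Finset.sum_le_sum_of_subset_of_nonneg (Finset.filter_subset _ _)
            (fun y _ _ => mul_nonneg (mul_nonneg ha0 (Nat.cast_nonneg _)) (Nat.cast_nonneg _))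
      _ = δ / (2*L)^(j+4) * (X.card:ℝ)
            * ((∑ y ∈ Finset.univ, (G.finsetWalkLength (j+2) y v₀).card : ℕ) : ℝ) := by
          rw [Nat.cast_sum, Finset.mul_sum]
      _ ≤ δ / (2*L)^(j+4) * (X.card:ℝ) * ((X.card:ℝ) * (d:ℝ)^(j+1)) := by
          refine mul_le_mul_of_nonneg_left ?_ (mul_nonneg ha0 (Nat.cast_nonneg _))
          calc ((∑ y ∈ Finset.univ, (G.finsetWalkLength (j+2) y v₀).card : ℕ) : ℝ)
              ≤ ((X.card * d^(j+1) : ℕ) : ℝ) := by exact_mod_cast hsumR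
            _ = (X.card:ℝ) * (d:ℝ)^(j+1) := by push_cast; ring
      _ ≤ δ / (2*L)^(j+4) * (d:ℝ) * ((d:ℝ) * (d:ℝ)^(j+1)) := by
          refine mul_le_mul (mul_le_mul_of_nonneg_left hXdr ha0)
            (mul_le_mul_of_nonneg_right hXdr (by positivity))
            (mul_nonneg (Nat.cast_nonneg _) (by positivity))
            (mul_nonneg ha0 hd0.le)
      _ = δ * (d:ℝ)^(j+3) / (2*L)^(j+4) := by ring
      _ ≤ δ * (d:ℝ)^(j+3) := div_le_self (mul_nonneg hδ.le (by positivity)) hLpow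
  have hgood : δ * (d:ℝ)^(j+3) ≤ ∑ y ∈ Y, (Ny y:ℝ) := by
    have hc : ((∑ y ∈ Y, Ny y : ℕ):ℝ)
        + ((∑ y ∈ Finset.univ.filter (fun y => ¬ Pq y), Ny y : ℕ):ℝ) = (W.card:ℝ) := by
      exact_mod_cast congrArg (Nat.cast : ℕ → ℝ) hsplit
    push_cast at hc
    linarith
  have hYup : (∑ y ∈ Y, (Ny y:ℝ)) ≤ (Y.card:ℝ) * (d:ℝ)^(j+2) := by
    have hterm : ∀ y ∈ Y, (Ny y:ℝ) ≤ (d:ℝ)^(j+2) := by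
      intro y _
      have h2 : degX y ≤ d := le_trans (Finset.card_le_card (Finset.filter_subset _ _)) hXd
      have h3 : Ny y ≤ d * d^(j+1) := le_trans (hNyb y) (Nat.mul_le_mul_right _ h2)
      calc (Ny y:ℝ) ≤ ((d * d^(j+1) : ℕ):ℝ) := by exact_mod_cast h3
        _ = (d:ℝ)^(j+2) := by push_cast; ring
    calc ∑ y ∈ Y, (Ny y:ℝ) ≤ ∑ _y ∈ Y, (d:ℝ)^(j+2) := Finset.sum_le_sum hterm
      _ = (Y.card:ℝ) * (d:ℝ)^(j+2) := by rw [Finset.sum_const, nsmul_eq_mul]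
  have hYc : δ * (d:ℝ) ≤ (Y.card:ℝ) := by
    have h2 : (δ*(d:ℝ)) * (d:ℝ)^(j+2) ≤ (Y.card:ℝ) * (d:ℝ)^(j+2) := by
      calc (δ*(d:ℝ))*(d:ℝ)^(j+2) = δ*(d:ℝ)^(j+3) := by ring
        _ ≤ _ := le_trans hgood hYup
    exact le_of_mul_le_mul_right h2 (by positivity)
  refine ⟨X, Y, ?_, ?_⟩
  · have he : (((X ×ˢ Y).filter fun p => G.Adj p.1 p.2).card) = ∑ y ∈ Y, degX y := by
      rw [Finset.card_filter, Finset.sum_product_right]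
      exact Finset.sum_congr rfl fun y _ => (Finset.card_filter _ _).symm
    rw [he]
    push_cast
    calc δ / (2*L)^(j+4) * (X.card:ℝ) * (Y.card:ℝ)
        = ∑ _y ∈ Y, δ / (2*L)^(j+4) * (X.card:ℝ) := by
          rw [Finset.sum_const, nsmul_eq_mul]; ring
      _ ≤ ∑ y ∈ Y, (degX y:ℝ) := Finset.sum_le_sum fun y hy => by
          rw [hYdef, Finset.mem_filter] at hy
          exact hy.2
  · have hsub3 : j+4-3 = j+1 := by omega
    rw [hsub3]
    have hmin : δ * (d:ℝ) / L^(j+1) ≤ δ * d :=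
      div_le_self (mul_nonneg hδ.le hd0.le) (one_le_pow₀ hL)
    have hδd : 0 < δ * (d:ℝ) := mul_pos hδ hd0
    refine le_min (le_trans hmin (by linarith)) (le_trans hmin hYc)
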